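/- Let X and Y be bounded metric spaces whose metric segment [X,Y] is extreme, i.e. 2·d_GH(X,Y) = diam X = diam Y > 0. Suppose a metric space Z satisfies d_GH(X,Z) < ∞, d_GH(X,Y) + d_GH(Y,Z) = d_GH(X,Z) and d_GH(Y,Z) > 0 (i.e. the segment [X,Y] extends beyond Y to Z). Then Z is bounded, diam Z > diam Y, and 2·d_GH(Y,Z) = diam Z − diam Y (Z is subextreme with respect to Y). -/

import Mathlib

open Metric Set
open scoped ENNReal

/-- A correspondence between `X` and `Y`: a relation whose projections are surjective. -/
def IsCorrespondence {X Y : Type*} (R : Set (X × Y)) : Prop :=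
  (∀ x : X, ∃ y : Y, (x, y) ∈ R) ∧ (∀ y : Y, ∃ x : X, (x, y) ∈ R)

/-- The distortion of a relation `R ⊆ X × Y`. -/
noncomputable def corrDistortion {X Y : Type*} [MetricSpace X] [MetricSpace Y]
    (R : Set (X × Y)) : ℝ≥0∞ :=
  ⨆ p ∈ R, ⨆ q ∈ R, ENNReal.ofReal |dist p.1 q.1 - dist p.2 q.2|

/-- The Gromov–Hausdorff distance between (arbitrary) metric spaces:
half the infimum of distortions of correspondences. -/
noncomputable def ghDist (X Y : Type*) [MetricSpace X] [MetricSpace Y] : ℝ≥0∞ :=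
  (⨅ (R : Set (X × Y)) (_ : IsCorrespondence R), corrDistortion R) / 2

lemma two_ghDist (X Z : Type*) [MetricSpace X] [MetricSpace Z] :
    2 * ghDist X Z = ⨅ (R : Set (X × Z)) (_ : IsCorrespondence R), corrDistortion R := by
  rw [ghDist, mul_comm, ENNReal.div_mul_cancel two_ne_zero ENNReal.ofNat_ne_top]

lemma ofReal_abs_le_corrDistortion {X Z : Type*} [MetricSpace X] [MetricSpace Z]
    {R : Set (X × Z)} {p q : X × Z} (hp : p ∈ R) (hq : q ∈ R) :
    ENNReal.ofReal |dist p.1 q.1 - dist p.2 q.2| ≤ corrDistortion R :=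
  le_iSup₂_of_le p hp (le_iSup₂_of_le q hq le_rfl)

lemma diam_le_of_corr {X Z : Type*} [MetricSpace X] [MetricSpace Z]
    {R : Set (X × Z)} (hR : IsCorrespondence R) :
    EMetric.diam (univ : Set Z) ≤ EMetric.diam (univ : Set X) + corrDistortion R := by
  refine EMetric.diam_le fun z _ z' _ => ?_
  obtain ⟨x, hx⟩ := hR.2 z
  obtain ⟨x', hx'⟩ := hR.2 z'
  have h1 : dist z z' ≤ dist x x' + |dist x x' - dist z z'| := by
    rw [abs_sub_comm]; linarith [le_abs_self (dist z z' - dist x x')]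
  calc edist z z' = ENNReal.ofReal (dist z z') := edist_dist _ _
    _ ≤ ENNReal.ofReal (dist x x' + |dist x x' - dist z z'|) := ENNReal.ofReal_le_ofReal h1
    _ ≤ ENNReal.ofReal (dist x x') + ENNReal.ofReal |dist x x' - dist z z'| :=
        ENNReal.ofReal_add_le
    _ ≤ EMetric.diam (univ : Set X) + corrDistortion R := by
        gcongr
        · rw [← edist_dist]
          exact EMetric.edist_le_diam_of_mem (mem_univ _) (mem_univ _)
        · exact ofReal_abs_le_corrDistortion (p := (x, z)) (q := (x', z')) hx hx'

lemma diam_le_diam_add_two_ghDist (X Z : Type*) [MetricSpace X] [MetricSpace Z] :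
    EMetric.diam (univ : Set Z) ≤ EMetric.diam (univ : Set X) + 2 * ghDist X Z := by
  rw [two_ghDist, ← tsub_le_iff_left]
  exact le_iInf₂ fun R hR => tsub_le_iff_left.2 (diam_le_of_corr hR)

lemma two_ghDist_le_max (X Z : Type*) [MetricSpace X] [MetricSpace Z]
    [Nonempty X] [Nonempty Z] :
    2 * ghDist X Z ≤ max (EMetric.diam (univ : Set X)) (EMetric.diam (univ : Set Z)) := by
  rw [two_ghDist]
  have hcorr : IsCorrespondence (univ : Set (X × Z)) :=
    ⟨fun x => ⟨Classical.arbitrary Z, mem_univ _⟩, fun z => ⟨Classical.arbitrary X, mem_univ _⟩⟩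
  refine le_trans (iInf₂_le _ hcorr) ?_
  refine iSup₂_le fun p _ => iSup₂_le fun q _ => ?_
  have habs : |dist p.1 q.1 - dist p.2 q.2| ≤ max (dist p.1 q.1) (dist p.2 q.2) := by
    rw [abs_sub_le_iff]
    constructor
    · linarith [dist_nonneg (x := p.2) (y := q.2), le_max_left (dist p.1 q.1) (dist p.2 q.2)]
    · linarith [dist_nonneg (x := p.1) (y := q.1), le_max_right (dist p.1 q.1) (dist p.2 q.2)]
  calc ENNReal.ofReal |dist p.1 q.1 - dist p.2 q.2|
      ≤ ENNReal.ofReal (max (dist p.1 q.1) (dist p.2 q.2)) := ENNReal.ofReal_le_ofReal habs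
    _ = max (ENNReal.ofReal (dist p.1 q.1)) (ENNReal.ofReal (dist p.2 q.2)) := by
        rcases le_total (dist p.1 q.1) (dist p.2 q.2) with h | h <;>
          simp [max_eq_right, max_eq_left, h, ENNReal.ofReal_le_ofReal h]
    _ ≤ max (EMetric.diam (univ : Set X)) (EMetric.diam (univ : Set Z)) := by
        apply max_le_max <;>
          · rw [← edist_dist]
            exact EMetric.edist_le_diam_of_mem (mem_univ _) (mem_univ _)

/-- if the metric segment `[X,Y]` is extreme
(`2·d_GH(X,Y) = diam X = diam Y > 0`) and it extends beyond `Y` to `Z`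
(`Y` lies between `X` and `Z`, `d_GH(Y,Z) > 0`), then `Z` is bounded,
`diam Z > diam Y`, and `Z` is subextreme with respect to `Y`:
`2·d_GH(Y,Z) = diam Z − diam Y`. -/
theorem stmt9 {X Y : Type u} [MetricSpace X] [MetricSpace Y] [Nonempty X] [Nonempty Y]
    (hXb : EMetric.diam (Set.univ : Set X) ≠ ⊤)
    (hYb : EMetric.diam (Set.univ : Set Y) ≠ ⊤)
    (hext : 2 * ghDist X Y = ENNReal.ofReal (Metric.diam (Set.univ : Set X)))
    (hdiam : Metric.diam (Set.univ : Set X) = Metric.diam (Set.univ : Set Y))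
    (hpos : 0 < Metric.diam (Set.univ : Set X))
    (Z : Type v) [MetricSpace Z] [Nonempty Z]
    (hfin : ghDist X Z ≠ ⊤)
    (hbtw : ghDist X Y + ghDist Y Z = ghDist X Z)
    (hYZ : 0 < ghDist Y Z) :
    EMetric.diam (Set.univ : Set Z) ≠ ⊤ ∧
    Metric.diam (Set.univ : Set Y) < Metric.diam (Set.univ : Set Z) ∧
    2 * ghDist Y Z =
      ENNReal.ofReal (Metric.diam (Set.univ : Set Z) - Metric.diam (Set.univ : Set Y)) := by
  set eX := EMetric.diam (Set.univ : Set X) with heXdef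
  set eY := EMetric.diam (Set.univ : Set Y) with heYdef
  set eZ := EMetric.diam (Set.univ : Set Z) with heZdef
  have hdX : Metric.diam (Set.univ : Set X) = eX.toReal := rfl
  have hdY : Metric.diam (Set.univ : Set Y) = eY.toReal := rfl
  have hdZ : Metric.diam (Set.univ : Set Z) = eZ.toReal := rfl
  have heX : ENNReal.ofReal (Metric.diam (Set.univ : Set X)) = eX := by
    rw [hdX, ENNReal.ofReal_toReal hXb]
  have heY : ENNReal.ofReal (Metric.diam (Set.univ : Set Y)) = eY := by
    rw [hdY, ENNReal.ofReal_toReal hYb]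
  have hXY : 2 * ghDist X Y = eX := by rw [hext, heX]
  have heXY : eX = eY := by rw [← heX, ← heY, hdiam]
  -- ghDist X Y and ghDist Y Z are finite
  have hXYfin : 2 * ghDist X Y ≠ ⊤ := by rw [hXY]; exact hXb
  have hYZfin : ghDist Y Z ≠ ⊤ := by
    refine ne_top_of_le_ne_top hfin ?_
    rw [← hbtw]; exact le_add_self
  -- Z is bounded
  have hZle : eZ ≤ eX + 2 * ghDist X Z := diam_le_diam_add_two_ghDist X Z
  have hZb : eZ ≠ ⊤ := by
    refine ne_top_of_le_ne_top ?_ hZle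
    exact ENNReal.add_ne_top.2 ⟨hXb, ENNReal.mul_ne_top ENNReal.ofNat_ne_top hfin⟩
  -- eY < eZ
  have hlt : eY < eZ := by
    by_contra h
    push_neg at h
    have hmax : 2 * ghDist X Z ≤ eX :=
      le_trans (two_ghDist_le_max X Z) (max_le le_rfl (h.trans heXY.ge))
    have h2 : 2 * ghDist X Y + 2 * ghDist Y Z ≤ 2 * ghDist X Y + 0 := by
      rw [add_zero, ← mul_add, hbtw]
      exact hmax.trans hXY.ge
    have h3 : 2 * ghDist Y Z ≤ 0 := (ENNReal.add_le_add_iff_left hXYfin).1 h2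
    rcases mul_eq_zero.1 (le_antisymm h3 zero_le) with h0 | h0
    · exact two_ne_zero h0
    · exact hYZ.ne' h0
  -- upper bound: 2·ghDist Y Z ≤ eZ - eY
  have hub : 2 * ghDist Y Z ≤ eZ - eY := by
    refine ENNReal.le_sub_of_add_le_left hYb ?_
    have hmax : 2 * ghDist X Z ≤ eZ :=
      le_trans (two_ghDist_le_max X Z) (max_le (heXY.le.trans hlt.le) le_rfl)
    calc eY + 2 * ghDist Y Z = 2 * ghDist X Y + 2 * ghDist Y Z := by rw [hXY, heXY]
      _ = 2 * ghDist X Z := by rw [← mul_add, hbtw]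
      _ ≤ eZ := hmax
  -- lower bound: eZ - eY ≤ 2·ghDist Y Z
  have hlb : eZ - eY ≤ 2 * ghDist Y Z :=
    tsub_le_iff_left.2 (diam_le_diam_add_two_ghDist Y Z)
  have heq : 2 * ghDist Y Z = eZ - eY := le_antisymm hub hlb
  refine ⟨hZb, ?_, ?_⟩
  · rw [hdY, hdZ]
    exact (ENNReal.toReal_lt_toReal hYb hZb).2 hlt
  · rw [heq, hdY, hdZ, ENNReal.ofReal_sub _ ENNReal.toReal_nonneg,
      ENNReal.ofReal_toReal hZb, ENNReal.ofReal_toReal hYb]
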